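/- Let X be a reflexive Banach space, A: X → X* a maximal monotone operator which is coercive (⟨A(x), x⟩/‖x‖ → +∞ as ‖x‖ → ∞). Then A is surjective; in particular there exists v₀ ∈ X with A(v₀) = 0 when 0 is in the range. -/

import Mathlib

open Filter Topology Finset

open Finset

/-- Minimax-type lemma: if `a i j + a j i ≥ 0` for all `i j`, then some `λ` in the
standard simplex satisfies `∑ j, λ j * a i j ≥ 0` for every `i`. -/
theorem game_lemma {n : ℕ} [NeZero n] (a : Fin n → Fin n → ℝ)
    (hsym : ∀ i j, 0 ≤ a i j + a j i) :
    ∃ l ∈ stdSimplex ℝ (Fin n), ∀ i, 0 ≤ ∑ j, l j * a i j := by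
  by_contra hcon
  push_neg at hcon
  -- the image K of the simplex under the linear map, and the orthant P, are disjoint
  set T : (Fin n → ℝ) →ₗ[ℝ] (Fin n → ℝ) :=
    { toFun := fun l i => ∑ j, l j * a i j
      map_add' := by
        intro p q; funext i; simp [add_mul, Finset.sum_add_distrib]
      map_smul' := by
        intro c p; funext i; simp [Finset.mul_sum, mul_assoc] }
  have hTcont : Continuous T := by
    show Continuous fun l : Fin n → ℝ => fun i => ∑ j, l j * a i j
    apply continuous_pi
    intro i
    exact continuous_finset_sum _ fun j _ => (continuous_apply j).mul continuous_const
  set K : Set (Fin n → ℝ) := T '' stdSimplex ℝ (Fin n)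
  set P : Set (Fin n → ℝ) := {q | ∀ i, 0 ≤ q i}
  have hKc : IsCompact K := (isCompact_stdSimplex _ _).image hTcont
  have hKconv : Convex ℝ K := (convex_stdSimplex ℝ _).linear_image T
  have hPc : IsClosed P := by
    have : P = ⋂ i, (fun q : Fin n → ℝ => q i) ⁻¹' Set.Ici 0 := by
      ext q; simp [P, Set.mem_iInter]
    rw [this]
    exact isClosed_iInter fun i => isClosed_Ici.preimage (continuous_apply i)
  have hPconv : Convex ℝ P := by
    intro p hp q hq s t hs ht hst i
    have := hp i; have := hq i
    have : 0 ≤ s * p i + t * q i := by positivity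
    simpa using this
  have hdisj : Disjoint K P := by
    rw [Set.disjoint_left]
    rintro q ⟨l, hl, rfl⟩ hq
    obtain ⟨i, hi⟩ := hcon l hl
    exact absurd (hq i) (not_le.mpr hi)
  obtain ⟨f, u, v, hfK, huv, hfP⟩ :=
    geometric_hahn_banach_compact_closed hKconv hKc hPconv hPc hdisj
  have hv0 : v < 0 := by
    have := hfP 0 (fun i => le_refl 0)
    simpa using this
  set μ : Fin n → ℝ := fun i => f (fun j => if i = j then (1:ℝ) else 0) with hμ
  have hμnn : ∀ i, 0 ≤ μ i := by
    intro i
    by_contra h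
    push_neg at h
    have hq : ((v / μ i) • (fun j => if i = j then (1:ℝ) else 0) : Fin n → ℝ) ∈ P := by
      intro j
      show 0 ≤ (v / μ i) * (if i = j then (1:ℝ) else 0)
      rcases eq_or_ne i j with rfl | hne
      · rw [if_pos rfl, mul_one]
        exact le_of_lt (div_pos_of_neg_of_neg hv0 h)
      · simp [if_neg hne]
    have hlt := hfP _ hq
    rw [map_smul] at hlt
    have hlt2 : v < v / μ i * μ i := hlt
    rw [div_mul_cancel₀ _ (ne_of_lt h)] at hlt2
    exact lt_irrefl v hlt2
  have hf_eq : ∀ l : Fin n → ℝ, f l = ∑ i, l i * μ i := by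
    intro l
    conv_lhs => rw [pi_eq_sum_univ l]
    rw [map_sum]
    refine Finset.sum_congr rfl fun i _ => ?_
    rw [map_smul]
    simp [mul_comm, hμ]
  have hquad : ∀ c : Fin n → ℝ, (∀ i, 0 ≤ c i) → 0 ≤ ∑ i, ∑ j, c i * c j * a i j := by
    intro c hc
    have hswap : ∑ i, ∑ j, c i * c j * a i j = ∑ i, ∑ j, c i * c j * a j i := by
      rw [Finset.sum_comm]
      exact Finset.sum_congr rfl fun j _ => Finset.sum_congr rfl fun i _ => by ring
    have h1 : 0 ≤ ∑ i, ∑ j, c i * c j * (a i j + a j i) :=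
      Finset.sum_nonneg fun i _ => Finset.sum_nonneg fun j _ =>
        mul_nonneg (mul_nonneg (hc i) (hc j)) (hsym i j)
    have h2 : ∑ i, ∑ j, c i * c j * (a i j + a j i)
        = (∑ i, ∑ j, c i * c j * a i j) + (∑ i, ∑ j, c i * c j * a j i) := by
      rw [← Finset.sum_add_distrib]
      refine Finset.sum_congr rfl fun i _ => ?_
      rw [← Finset.sum_add_distrib]
      refine Finset.sum_congr rfl fun j _ => by ring
    linarith [hswap, h1, h2]
  have hKne : ((fun _ => (n:ℝ)⁻¹ : Fin n → ℝ)) ∈ stdSimplex ℝ (Fin n) := by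
    constructor
    · intro i; positivity
    · rw [Finset.sum_const, Finset.card_univ, Fintype.card_fin, nsmul_eq_mul,
        mul_inv_cancel₀]
      exact_mod_cast (NeZero.ne n)
  have hu0 : u < 0 := lt_trans huv hv0
  have hs : 0 < ∑ i, μ i := by
    rcases (Finset.sum_nonneg (fun i (_ : i ∈ Finset.univ) => hμnn i)).lt_or_eq with h | h
    · exact h
    · exfalso
      have hall : ∀ i, μ i = 0 := by
        intro i
        have := (Finset.sum_eq_zero_iff_of_nonneg (fun i _ => hμnn i)).mp h.symm
        exact this i (Finset.mem_univ i)
      have := hfK _ ⟨_, hKne, rfl⟩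
      rw [hf_eq] at this
      simp [hall] at this
      linarith
  set l : Fin n → ℝ := fun i => μ i / (∑ k, μ k) with hl
  have hlsimplex : l ∈ stdSimplex ℝ (Fin n) := by
    constructor
    · intro i; exact div_nonneg (hμnn i) hs.le
    · rw [← Finset.sum_div, div_self (ne_of_gt hs)]
  have hlK := hfK _ ⟨l, hlsimplex, rfl⟩
  rw [hf_eq] at hlK
  have hTl : ∑ i, (T l) i * μ i = (∑ k, μ k) * ∑ i, ∑ j, l i * l j * a i j := by
    rw [Finset.mul_sum]
    congr 1; funext i
    show (∑ j, l j * a i j) * μ i = (∑ k, μ k) * ∑ j, l i * l j * a i j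
    rw [Finset.mul_sum, Finset.sum_mul]
    congr 1; funext j
    have hμi : μ i = (∑ k, μ k) * l i := by
      rw [hl]; field_simp
    rw [hμi]; ring
  rw [hTl] at hlK
  have hq := hquad l (fun i => hlsimplex.1 i)
  nlinarith


/-- Finite Minty lemma: given finitely many monotone pairs, some point in the convex
hull of the `y i` satisfies all the Minty inequalities. -/
theorem finite_minty {X : Type*} [NormedAddCommGroup X] [NormedSpace ℝ X]
    {n : ℕ} [NeZero n] (ys : X →L[ℝ] ℝ) (y : Fin n → X) (z : Fin n → (X →L[ℝ] ℝ))
    (hm : ∀ i j, 0 ≤ (z i - z j) (y i - y j)) (ρ : ℝ) (hρ : ∀ i, ‖y i‖ ≤ ρ) :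
    ∃ x : X, ‖x‖ ≤ ρ ∧ ∀ i, (z i - ys) x ≤ (z i - ys) (y i) := by
  obtain ⟨l, hl, hli⟩ := game_lemma (fun i j => (z i - ys) (y i - y j)) (by
    intro i j
    have := hm i j
    simp only [ContinuousLinearMap.sub_apply, map_sub] at this ⊢
    linarith)
  refine ⟨∑ j, l j • y j, ?_, ?_⟩
  · calc ‖∑ j, l j • y j‖ ≤ ∑ j, ‖l j • y j‖ := norm_sum_le _ _
      _ ≤ ∑ j, l j * ρ := by
          refine Finset.sum_le_sum fun j _ => ?_
          rw [norm_smul, Real.norm_eq_abs, abs_of_nonneg (hl.1 j)]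
          exact mul_le_mul_of_nonneg_left (hρ j) (hl.1 j)
      _ = ρ := by rw [← Finset.sum_mul, hl.2, one_mul]
  · intro i
    have h := hli i
    have hexp : ∑ j, l j * ((z i - ys) (y i - y j))
        = (z i - ys) (y i) - (z i - ys) (∑ j, l j • y j) := by
      rw [map_sum]
      rw [show ∑ j, l j * ((z i - ys) (y i - y j))
          = ∑ j, (l j * (z i - ys) (y i) - (z i - ys) (l j • y j)) by
        refine Finset.sum_congr rfl fun j _ => ?_
        rw [map_sub, map_smul]
        simp only [smul_eq_mul]
        ring]
      rw [Finset.sum_sub_distrib, ← Finset.sum_mul, hl.2, one_mul]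
    rw [hexp] at h
    linarith

set_option maxHeartbeats 1000000 in
theorem maximalMonotone_coercive_surjective {X : Type*} [NormedAddCommGroup X]
    [NormedSpace ℝ X] [CompleteSpace X]
    (hrefl : Function.Surjective (NormedSpace.inclusionInDoubleDual ℝ X))
    (A : X → Set (X →L[ℝ] ℝ)) (hne : ∀ x, (A x).Nonempty)
    (hmono : ∀ x y : X, ∀ xs ∈ A x, ∀ ys ∈ A y, 0 ≤ (xs - ys) (x - y))
    (hmax : ∀ (x : X) (xs : X →L[ℝ] ℝ),
      (∀ y : X, ∀ ys ∈ A y, 0 ≤ (xs - ys) (x - y)) → xs ∈ A x)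
    (hcoer : ∀ M : ℝ, ∃ R : ℝ, ∀ x : X, R < ‖x‖ → ∀ xs ∈ A x, M * ‖x‖ ≤ xs x) :
    (∀ ys : X →L[ℝ] ℝ, ∃ x : X, ys ∈ A x) ∧ ∃ v₀ : X, (0 : X →L[ℝ] ℝ) ∈ A v₀ := by
  classical
  have main : ∀ ys : X →L[ℝ] ℝ, ∃ x : X, ys ∈ A x := by
    intro ys
    obtain ⟨R, hR⟩ := hcoer (‖ys‖ + 1)
    set R' : ℝ := max R 0 with hR'def
    set ρ : ℝ := R' + 1 with hρdef
    have hR'0 : 0 ≤ R' := le_max_right R 0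
    have hρ0 : 0 < ρ := by positivity
    -- Step 1: a point satisfying all Minty inequalities for pairs within the ball of radius ρ
    obtain ⟨x₀, hx₀ρ, hx₀⟩ : ∃ x₀ : X, ‖x₀‖ ≤ ρ ∧
        ∀ y : X, ∀ z ∈ A y, ‖y‖ ≤ ρ → (z - ys) x₀ ≤ (z - ys) y := by
      let W := WeakDual ℝ (X →L[ℝ] ℝ)
      set ι : X → WeakDual ℝ (X →L[ℝ] ℝ) := fun x =>
        StrongDual.toWeakDual (NormedSpace.inclusionInDoubleDual ℝ X x) with hι
      set S : Set (WeakDual ℝ (X →L[ℝ] ℝ)) :=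
        WeakDual.toStrongDual ⁻¹' Metric.closedBall (0 : StrongDual ℝ (X →L[ℝ] ℝ)) ρ
        with hSdef
      have hS : IsCompact S := WeakDual.isCompact_closedBall 0 ρ
      set P := {p : X × (X →L[ℝ] ℝ) // p.2 ∈ A p.1 ∧ ‖p.1‖ ≤ ρ} with hPdef
      set C : P → Set (WeakDual ℝ (X →L[ℝ] ℝ)) := fun p =>
        {Φ : WeakDual ℝ (X →L[ℝ] ℝ) | Φ (p.1.2 - ys) ≤ (p.1.2 - ys) p.1.1} with hCdef
      have hCclosed : ∀ p, IsClosed (C p) := fun p =>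
        isClosed_Iic.preimage (WeakDual.eval_continuous _)
      have hnei : (S ∩ ⋂ p, C p).Nonempty := by
        by_contra hemp
        rw [Set.not_nonempty_iff_eq_empty] at hemp
        obtain ⟨u, hu⟩ := hS.elim_finite_subfamily_closed C hCclosed hemp
        rcases u.eq_empty_or_nonempty with rfl | hu0
        · have h0 : (0 : WeakDual ℝ (X →L[ℝ] ℝ)) ∈ S ∩ ⋂ p ∈ (∅ : Finset P), C p := by
            constructor
            · show WeakDual.toStrongDual (0 : W) ∈ Metric.closedBall 0 ρ
              simp [hρ0.le]
            · simp
          rw [hu] at h0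
          exact h0
        · set n := u.card with hn
          haveI : NeZero n := ⟨Finset.card_ne_zero_of_mem hu0.choose_spec⟩
          set e : Fin n ≃ {p : P // p ∈ u} := u.equivFin.symm with he
          set y : Fin n → X := fun i => ((e i : P) : X × (X →L[ℝ] ℝ)).1 with hy
          set z : Fin n → (X →L[ℝ] ℝ) := fun i => ((e i : P) : X × (X →L[ℝ] ℝ)).2 with hz
          have hm : ∀ i j, 0 ≤ (z i - z j) (y i - y j) := fun i j =>
            hmono (y i) (y j) (z i) (e i).1.2.1 (z j) (e j).1.2.1
          have hρy : ∀ i, ‖y i‖ ≤ ρ := fun i => (e i).1.2.2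
          obtain ⟨x, hxρ, hx⟩ := finite_minty ys y z hm ρ hρy
          have hΦ : ι x ∈ S ∩ ⋂ p ∈ u, C p := by
            constructor
            · show WeakDual.toStrongDual (ι x) ∈ Metric.closedBall 0 ρ
              suffices hsuff : ‖WeakDual.toStrongDual (ι x)‖ ≤ ρ by rw [Metric.mem_closedBall]; exact (dist_zero_right (WeakDual.toStrongDual (ι x))).le.trans hsuff
              have : ‖NormedSpace.inclusionInDoubleDual ℝ X x‖ = ‖x‖ :=
                (NormedSpace.inclusionInDoubleDualLi ℝ).norm_map x
              calc ‖WeakDual.toStrongDual (ι x)‖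
                  = ‖NormedSpace.inclusionInDoubleDual ℝ X x‖ := rfl
                _ = ‖x‖ := this
                _ ≤ ρ := hxρ
            · rw [Set.mem_iInter₂]
              intro p hp
              have hi : (e (e.symm ⟨p, hp⟩) : P) = p := by
                rw [Equiv.apply_symm_apply]
              have := hx (e.symm ⟨p, hp⟩)
              rw [hCdef]
              show (ι x) ((p : X × (X →L[ℝ] ℝ)).2 - ys)
                  ≤ ((p : X × (X →L[ℝ] ℝ)).2 - ys) (p : X × (X →L[ℝ] ℝ)).1
              have hιapp : ∀ w : X →L[ℝ] ℝ, (ι x) w = w x := fun w => rfl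
              rw [hιapp]
              rw [hy, hz] at this
              simp only [hi] at this
              exact this
          rw [hu] at hΦ
          exact hΦ
      obtain ⟨Φ₀, hΦ₀S, hΦ₀C⟩ := hnei
      obtain ⟨x₀, hx₀eq⟩ := hrefl (WeakDual.toStrongDual Φ₀)
      refine ⟨x₀, ?_, ?_⟩
      · have hnx : ‖NormedSpace.inclusionInDoubleDual ℝ X x₀‖ = ‖x₀‖ :=
          (NormedSpace.inclusionInDoubleDualLi ℝ).norm_map x₀
        rw [← hnx, hx₀eq]
        have hball : WeakDual.toStrongDual Φ₀ ∈
            Metric.closedBall (0 : StrongDual ℝ (X →L[ℝ] ℝ)) ρ := hΦ₀S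
        replace hball : ‖WeakDual.toStrongDual Φ₀‖ ≤ ρ := by rw [Metric.mem_closedBall] at hball; exact (dist_zero_right (WeakDual.toStrongDual Φ₀)).ge.trans hball
        exact hball
      · intro yy zz hzz hyy
        have hmem := Set.mem_iInter.mp hΦ₀C ⟨(yy, zz), hzz, hyy⟩
        have h1 : Φ₀ (zz - ys) ≤ (zz - ys) yy := hmem
        have h2 : Φ₀ (zz - ys) = (zz - ys) x₀ := by
          have : NormedSpace.inclusionInDoubleDual ℝ X x₀ (zz - ys) = (zz - ys) x₀ := rfl
          rw [← this, hx₀eq]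
          rfl
        rw [h2] at h1
        exact h1
    -- Step 2: coercivity bound
    have hys_le : ys x₀ ≤ ‖ys‖ * ‖x₀‖ :=
      le_trans (le_abs_self _) (by rw [← Real.norm_eq_abs]; exact ys.le_opNorm x₀)
    have hbound : ‖x₀‖ ≤ R' := by
      by_contra h
      push_neg at h
      have hx₀pos : 0 < ‖x₀‖ := lt_of_le_of_lt hR'0 h
      set c : ℝ := (R' + ‖x₀‖) / (2 * ‖x₀‖) with hc
      have hc0 : 0 < c := by positivity
      have hc1 : c < 1 := by
        rw [hc, div_lt_one (by positivity)]
        linarith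
      have hnorm_cx : ‖c • x₀‖ = (R' + ‖x₀‖) / 2 := by
        rw [norm_smul, Real.norm_eq_abs, abs_of_pos hc0, hc]
        field_simp
      have hR'lt : R' < ‖c • x₀‖ := by rw [hnorm_cx]; linarith
      have hcxρ : ‖c • x₀‖ ≤ ρ := by rw [hnorm_cx]; rw [hρdef]; linarith
      obtain ⟨z₁, hz₁⟩ := hne (c • x₀)
      -- Minty inequality for the pair (c • x₀, z₁)
      have hminty := hx₀ (c • x₀) z₁ hz₁ hcxρ
      have hm2 : (z₁ - ys) x₀ ≤ c * ((z₁ - ys) x₀) := by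
        calc (z₁ - ys) x₀ ≤ (z₁ - ys) (c • x₀) := hminty
          _ = c * ((z₁ - ys) x₀) := by rw [map_smul]; simp
      have hm3 : (z₁ - ys) x₀ ≤ 0 := by nlinarith
      -- coercivity at c • x₀
      have hcoer1 : (‖ys‖ + 1) * ‖c • x₀‖ ≤ z₁ (c • x₀) :=
        hR (c • x₀) (lt_of_le_of_lt (le_max_left R 0) hR'lt) z₁ hz₁
      rw [hnorm_cx, map_smul] at hcoer1
      simp only [smul_eq_mul] at hcoer1
      have hz₁x : (‖ys‖ + 1) * ‖x₀‖ ≤ z₁ x₀ := by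
        have h2c : c * ‖x₀‖ = (R' + ‖x₀‖) / 2 := by rw [hc]; field_simp
        rw [← h2c] at hcoer1
        have h' : c * ((‖ys‖ + 1) * ‖x₀‖) ≤ c * z₁ x₀ := by
          calc c * ((‖ys‖ + 1) * ‖x₀‖) = (‖ys‖ + 1) * (c * ‖x₀‖) := by ring
            _ ≤ c * z₁ x₀ := hcoer1
        exact le_of_mul_le_mul_left h' hc0
      have : z₁ x₀ - ys x₀ ≤ 0 := by simpa using hm3
      nlinarith
    -- Step 3: maximality gives the conclusion
    refine ⟨x₀, hmax x₀ ys ?_⟩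
    intro y zz hzz
    set d : ℝ := ‖y - x₀‖ with hd
    have hd0 : 0 ≤ d := norm_nonneg _
    set t : ℝ := 1 / (2 * (d + 1)) with ht
    have ht0 : 0 < t := by positivity
    have ht1 : t < 1 := by
      rw [ht, div_lt_one (by positivity)]
      linarith
    have htd : t * d ≤ 1 := by
      rw [ht]
      rw [div_mul_eq_mul_div, div_le_one (by positivity)]
      nlinarith
    set yt : X := x₀ + t • (y - x₀) with hyt
    have hytρ : ‖yt‖ ≤ ρ := by
      calc ‖yt‖ ≤ ‖x₀‖ + ‖t • (y - x₀)‖ := norm_add_le _ _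
        _ = ‖x₀‖ + t * d := by rw [norm_smul, Real.norm_eq_abs, abs_of_pos ht0, hd]
        _ ≤ R' + 1 := add_le_add hbound htd
        _ = ρ := hρdef.symm
    obtain ⟨zt, hzt⟩ := hne yt
    have hminty := hx₀ yt zt hzt hytρ
    have h1 : 0 ≤ (zt - ys) (y - x₀) := by
      have : (zt - ys) yt = (zt - ys) x₀ + t * ((zt - ys) (y - x₀)) := by
        rw [hyt, map_add, map_smul]; simp
      rw [this] at hminty
      nlinarith
    have h2 : 0 ≤ (zt - zt) (y - x₀) := by simp
    have h3 : 0 ≤ (zz - zt) (y - x₀) := by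
      have hmono2 := hmono y yt zz hzz zt hzt
      have : y - yt = (1 - t) • (y - x₀) := by
        rw [hyt]
        rw [sub_smul, one_smul]
        abel
      rw [this, map_smul] at hmono2
      simp only [smul_eq_mul] at hmono2
      nlinarith
    have h4 : 0 ≤ (zz - ys) (y - x₀) := by
      have e1 : (zz - ys) (y - x₀) = (zz - zt) (y - x₀) + (zt - ys) (y - x₀) := by
        simp only [ContinuousLinearMap.sub_apply]
        ring
      rw [e1]
      linarith
    have : (ys - zz) (x₀ - y) = (zz - ys) (y - x₀) := by
      simp only [ContinuousLinearMap.sub_apply, map_sub]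
      ring
    rw [this]
    exact h4
  exact ⟨main, main 0⟩
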